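/- arXiv:1011.4141 — 3 statements merged into one kernel-verified Lean document; each statement's English description precedes it below -/
import Mathlib

section
/- Let (R, m) be a Noetherian local ring, a an ideal, M a finitely generated R-module, and t > 0. If F^i_a(M) is Artinian for all i < t, then a is contained in the radical of Ann_R(F^i_a(M)) for all i < t; i.e. some power of a annihilates F^i_a(M). -/
open CategoryTheory CategoryTheory.Limits IsLocalRing DirectSum

noncomputable section

/-- The inverse system `n ↦ M ⧸ aⁿM` with the natural projection maps. -/
def formalQuotDiagram (R : Type) [CommRing R] (a : Ideal R)
    (M : Type) [AddCommGroup M] [Module R M] : ℕᵒᵖ ⥤ ModuleCat R :=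
  CategoryTheory.Functor.ofOpSequence
    (X := fun n => ModuleCat.of R (M ⧸ (a ^ n • ⊤ : Submodule R M)))
    (fun n => ModuleCat.ofHom (Submodule.mapQ _ _ LinearMap.id (by
      simpa using Submodule.smul_mono (Ideal.pow_le_pow_right n.le_succ) le_rfl)))

/-- Formal local cohomology `𝔉ⁱ_a(M) = lim_n Hⁱ_m(M ⧸ aⁿM)`. -/
def formalLocalCohomology (R : Type) [CommRing R] [IsLocalRing R] (a : Ideal R) (i : ℕ)
    (M : Type) [AddCommGroup M] [Module R M] : ModuleCat R :=
  limit (formalQuotDiagram R a M ⋙ localCohomology (maximalIdeal R) i)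

/-- Attached primes of a module: primes of the form `Ann(M/N)`. -/
def attachedPrimes (R : Type) [CommRing R] (M : Type) [AddCommGroup M] [Module R M] :
    Set (Ideal R) :=
  {p | p.IsPrime ∧ ∃ N : Submodule R M, p = Module.annihilator R (M ⧸ N)}

/-- `E` is an injective hull (injective essential extension) of `N`. -/
def IsInjectiveHull (R : Type) [CommRing R] (N : Type) [AddCommGroup N] [Module R N]
    (E : Type) [AddCommGroup E] [Module R E] : Prop :=
  Module.Injective R E ∧ ∃ f : N →ₗ[R] E, Function.Injective f ∧
    ∀ S : Submodule R E, S ≠ ⊥ → S ⊓ LinearMap.range f ≠ ⊥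

/-- The module `⊕_{m maximal} R/m`, whose injective hull is the minimal injective
cogenerator `E_R`. -/
def cogenerator (R : Type) [CommRing R] : Type :=
  ⨁ m : MaximalSpectrum R, R ⧸ m.asIdeal

instance (R : Type) [CommRing R] : AddCommGroup (cogenerator R) := by
  unfold cogenerator; infer_instance

instance (R : Type) [CommRing R] : Module R (cogenerator R) := by
  unfold cogenerator; infer_instance

/-- Richardson's cosupport, via colocalization: `p ∈ CoSupp M` iff
`ᵖM = D_{R_p}((D_R M)_p) ≠ 0`, where `D` denotes duals into minimal injective
cogenerators (injective hulls of the direct sum of the residue fields). -/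
def CoSupport (R : Type) [CommRing R] (M : Type) [AddCommGroup M] [Module R M] :
    Set (PrimeSpectrum R) :=
  {p | ∀ (E : Type) [AddCommGroup E] [Module R E], IsInjectiveHull R (cogenerator R) E →
       ∀ (Ep : Type) [AddCommGroup Ep] [Module (Localization.AtPrime p.asIdeal) Ep],
         IsInjectiveHull (Localization.AtPrime p.asIdeal)
           (cogenerator (Localization.AtPrime p.asIdeal)) Ep →
       Nontrivial ((LocalizedModule p.asIdeal.primeCompl (M →ₗ[R] E))
          →ₗ[Localization.AtPrime p.asIdeal] Ep)}

/-- Coassociated primes over a local ring: `Coass M = Ass Hom_R(M, E(R/m))`. -/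
def Coassociated (R : Type) [CommRing R] [IsLocalRing R]
    (M : Type) [AddCommGroup M] [Module R M] : Set (PrimeSpectrum R) :=
  {p | ∀ (E : Type) [AddCommGroup E] [Module R E],
        IsInjectiveHull R (R ⧸ maximalIdeal R) E →
        p.asIdeal ∈ associatedPrimes R (M →ₗ[R] E)}

/-- The height of an ideal. -/
def idealHeight (R : Type) [CommRing R] (a : Ideal R) : ℕ∞ :=
  sInf {n | ∃ p : PrimeSpectrum R, a ≤ p.asIdeal ∧ Order.height p = n}

/-- The `a`-torsion submodule `H⁰_a(M) = ∪ₙ (0 :_M aⁿ)`. -/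
def idealTorsion (R : Type) [CommRing R] (a : Ideal R)
    (M : Type) [AddCommGroup M] [Module R M] : Submodule R M :=
  ⨆ n : ℕ, Submodule.torsionBySet R M ((a ^ n : Ideal R) : Set R)

/-- A Noetherian local ring is Gorenstein iff it has finite injective dimension
over itself, i.e. `Extⁱ(N, R) = 0` for all `i` larger than some bound and all `N`. -/
def IsGorensteinLocalRing (R : Type) [CommRing R] : Prop :=
  IsNoetherianRing R ∧ IsLocalRing R ∧
    ∃ n : ℕ, ∀ i : ℕ, n < i → ∀ N : ModuleCat R,
      Subsingleton (((Ext R (ModuleCat R) i).obj (Opposite.op N)).obj (ModuleCat.of R R))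

end
section Helpers
noncomputable section
variable {R : Type} [CommRing R]

lemma killed_of_iso {A B : ModuleCat R} (e : A ≅ B) {r : R}
    (h : ∀ x : A, r • x = 0) : ∀ y : B, r • y = 0 := by
  intro y
  have hy : e.hom (e.inv y) = y := by
    have := e.inv_hom_id
    calc e.hom (e.inv y) = (e.inv ≫ e.hom) y := rfl
    _ = y := by rw [this]; rfl
  rw [← hy, ← map_smul, h, map_zero]

lemma killed_colimit {J : Type} [SmallCategory J] (G : J ⥤ ModuleCat R) [HasColimit G]
    {r : R} (hG : ∀ j, ∀ x : G.obj j, r • x = 0) : ∀ z : (colimit G : ModuleCat R), r • z = 0 := by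
  intro z
  have key : (r • 𝟙 (colimit G) : colimit G ⟶ colimit G) = 0 := by
    apply colimit.hom_ext
    intro j
    rw [Linear.comp_smul, Category.comp_id, Limits.comp_zero]
    have : (r • 𝟙 (G.obj j) : G.obj j ⟶ G.obj j) = 0 := by
      apply ModuleCat.hom_ext; apply LinearMap.ext; intro x
      simp only [ModuleCat.hom_smul, ModuleCat.hom_id, ModuleCat.hom_zero, LinearMap.smul_apply, LinearMap.id_apply, LinearMap.zero_apply]
      exact hG j x
    rw [← Category.id_comp (colimit.ι G j), ← Linear.smul_comp, this, Limits.zero_comp]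
  calc r • z = (r • 𝟙 (colimit G) : colimit G ⟶ colimit G) z := rfl
  _ = 0 := by rw [key]; rfl

lemma killed_quot {M : Type*} [AddCommGroup M] [Module R M] (N : Submodule R M) {r : R}
    (h : ∀ x : M, r • x = 0) : ∀ y : M ⧸ N, r • y = 0 := by
  intro y
  obtain ⟨z, rfl⟩ := Submodule.Quotient.mk_surjective N y
  rw [← Submodule.Quotient.mk_smul, h, Submodule.Quotient.mk_zero]

lemma killed_homology (S : ShortComplex (ModuleCat.{0} R)) {r : R}
    (h : ∀ x : S.X₂, r • x = 0) : ∀ y : (S.homology : ModuleCat R), r • y = 0 := by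
  apply killed_of_iso S.moduleCatHomologyIso.symm
  refine killed_quot (LinearMap.range S.moduleCatToCycles) ?_
  intro x
  apply Subtype.ext
  simpa using h x.1

lemma killed_complex_homology (K : CochainComplex (ModuleCat.{0} R) ℕ) (i : ℕ) {r : R}
    (h : ∀ n, ∀ x : K.X n, r • x = 0) : ∀ y : (K.homology i : ModuleCat R), r • y = 0 :=
  killed_homology (K.sc i) (h i)

lemma killed_ext (i : ℕ) (X N : ModuleCat.{0} R) {r : R} (h : ∀ x : N, r • x = 0) :
    ∀ y : (((Ext R (ModuleCat.{0} R) i).obj (Opposite.op X)).obj N : ModuleCat R),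
      r • y = 0 := by
  let P : ProjectiveResolution X := ProjectiveResolution.of X
  apply killed_of_iso (P.isoExt i N).symm
  apply killed_complex_homology
  intro n x
  apply ModuleCat.hom_ext
  apply LinearMap.ext
  intro v
  simp only [ModuleCat.hom_smul, ModuleCat.hom_id, ModuleCat.hom_zero, LinearMap.smul_apply, LinearMap.id_apply, LinearMap.zero_apply]
  exact h _

lemma killed_localCohomology (J : Ideal R) (i : ℕ) (N : ModuleCat.{0} R) {r : R}
    (h : ∀ x : N, r • x = 0) :
    ∀ y : ((localCohomology J i).obj N : ModuleCat R), r • y = 0 := by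
  have hc := localCohomology.hasColimitDiagram.{0,0} (localCohomology.idealPowersDiagram J) i
  apply killed_of_iso
    (colimitObjIsoColimitCompEvaluation
      (localCohomology.diagram (localCohomology.idealPowersDiagram J) i) N).symm
  apply killed_colimit
  intro j x
  exact killed_ext i _ N h x

end
end Helpers

/-- if `𝔉ⁱ_a(M)` is Artinian for all `i < t`, then
`a ⊆ Rad(Ann 𝔉ⁱ_a(M))` for all `i < t`. -/
theorem stmt4 (R : Type) [CommRing R] [IsNoetherianRing R] [IsLocalRing R]
    (a : Ideal R) (M : Type) [AddCommGroup M] [Module R M] [Module.Finite R M]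
    (t : ℕ) (ht : 0 < t)
    (h : ∀ i < t, IsArtinian R (formalLocalCohomology R a i M)) :
    ∀ i < t, a ≤ (Module.annihilator R (formalLocalCohomology R a i M)).radical := by

  intro i hi
  haveI hart : IsArtinian R (formalLocalCohomology R a i M) := h i hi
  have G := formalQuotDiagram R a M ⋙ localCohomology (maximalIdeal R) i
  -- components are killed by the corresponding power of `a`
  have hcomp : ∀ n : ℕ, ∀ r ∈ a ^ n,
      ∀ y : (((formalQuotDiagram R a M ⋙ localCohomology (maximalIdeal R) i).obj
        (Opposite.op n)) : ModuleCat R), r • y = 0 := by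
    intro n r hr
    apply killed_localCohomology
    intro x
    obtain ⟨z, rfl⟩ := Submodule.Quotient.mk_surjective (a ^ n • ⊤ : Submodule R M) x
    change r • (Submodule.Quotient.mk z : M ⧸ (a ^ n • ⊤ : Submodule R M)) = 0
    rw [← Submodule.Quotient.mk_smul]
    exact (Submodule.Quotient.mk_eq_zero _).mpr
      (Submodule.smul_mem_smul hr Submodule.mem_top)
  have hproj : ∀ n : ℕ, ∀ x : (formalLocalCohomology R a i M : ModuleCat R),
      x ∈ (a ^ n • ⊤ : Submodule R (formalLocalCohomology R a i M)) →
      limit.π (formalQuotDiagram R a M ⋙ localCohomology (maximalIdeal R) i)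
        (Opposite.op n) x = 0 := by
    intro n x hx
    refine Submodule.smul_induction_on hx ?_ ?_
    · intro r hr m _
      erw [map_smul]
      exact hcomp n r hr _
    · intro u v hu hv
      erw [map_add, hu, hv, add_zero]
  have hbot : ∀ x : (formalLocalCohomology R a i M : ModuleCat R),
      (∀ n : ℕ, x ∈ (a ^ n • ⊤ : Submodule R (formalLocalCohomology R a i M))) → x = 0 := by
    intro x hx
    refine Concrete.limit_ext
      (formalQuotDiagram R a M ⋙ localCohomology (maximalIdeal R) i) x 0 ?_
    intro j
    rw [map_zero]
    exact hproj j.unop x (hx _)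
  obtain ⟨n, hn⟩ := IsArtinian.monotone_stabilizes
    (⟨fun k => OrderDual.toDual (a ^ k • ⊤ : Submodule R (formalLocalCohomology R a i M)),
      fun k l hkl => Submodule.smul_mono (Ideal.pow_le_pow_right hkl) le_rfl⟩ :
      ℕ →o (Submodule R (formalLocalCohomology R a i M))ᵒᵈ)
  have hzero : (a ^ (n+1) • ⊤ : Submodule R (formalLocalCohomology R a i M)) = ⊥ := by
    rw [eq_bot_iff]
    intro x hx
    have hall : ∀ m : ℕ,
        x ∈ (a ^ m • ⊤ : Submodule R (formalLocalCohomology R a i M)) := by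
      intro m
      rcases le_total m (n+1) with hm | hm
      · exact Submodule.smul_mono (Ideal.pow_le_pow_right hm) le_rfl hx
      · have h1 := hn (n+1) n.le_succ
        have h2 := hn m (n.le_succ.trans hm)
        have heq : (a ^ (n+1) • ⊤ : Submodule R (formalLocalCohomology R a i M))
            = a ^ m • ⊤ := congrArg OrderDual.ofDual (h1.symm.trans h2)
        rw [← heq]
        exact hx
    exact (Submodule.mem_bot _).mpr (hbot x hall)
  intro r hr
  refine ⟨n+1, ?_⟩
  rw [Module.mem_annihilator]
  intro m
  have hm : r ^ (n+1) • m ∈ (a ^ (n+1) • ⊤ :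
      Submodule R (formalLocalCohomology R a i M)) :=
    Submodule.smul_mem_smul (Ideal.pow_mem_pow hr _) Submodule.mem_top
  rw [hzero] at hm
  exact (Submodule.mem_bot _).mp hm
end

section
/- Let R be a Noetherian ring and M an R-module. Define the colocalization of M at a prime p as ^pM = D_{R_p}((D_R(M))_p), where D_R(-) = Hom_R(-, E_R) with E_R the injective hull of the direct sum of R/m over all maximal ideals m, and define CoSupp M = { p : ^pM ≠ 0 }. Then CoSupp M is stable under specialization: if p ∈ CoSupp M and p ⊆ q for primes p, q, then q ∈ CoSupp M. -/
open CategoryTheory CategoryTheory.Limits IsLocalRing DirectSum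

theorem exists_injectiveHull (S : Type) [CommRing S] (N : Type) [AddCommGroup N] [Module S N] :
    ∃ (E : Type) (_ : AddCommGroup E) (_ : Module S E), IsInjectiveHull S N E := by
  classical
  have einj : EnoughInjectives (ModuleCat.{0} S) := inferInstance
  let Nc : ModuleCat S := ModuleCat.of S N
  let J : ModuleCat S := Injective.under Nc
  have hJcat : CategoryTheory.Injective (ModuleCat.of S J) := Injective.injective_under Nc
  have hJinj : Module.Injective S J := Module.injective_module_of_injective_object S J
  let ι : N →ₗ[S] J := (Injective.ι Nc).hom
  have hιinj : Function.Injective ι :=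
    (ModuleCat.mono_iff_injective (Injective.ι Nc)).mp inferInstance
  set N₀ : Submodule S J := LinearMap.range ι with hN₀
  -- the set of essential extensions of N₀ inside J
  set ess : Set (Submodule S J) :=
    {P | N₀ ≤ P ∧ ∀ x ∈ P, x ≠ 0 → ∃ s : S, s • x ∈ N₀ ∧ s • x ≠ 0} with hessdef
  -- Zorn: maximal essential extension E
  obtain ⟨E, -, hEmem, hEmax⟩ :
      ∃ E, N₀ ≤ E ∧ E ∈ ess ∧ ∀ ⦃P⦄, P ∈ ess → E ≤ P → P ≤ E := by
    obtain ⟨E, h1, h2⟩ := zorn_le_nonempty₀ ess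
      (fun c hc hchain y hy => ⟨sSup c, ⟨le_trans (hc hy).1 (le_sSup hy),
        fun x hx hx0 => by
          obtain ⟨P, hP, hxP⟩ := (Submodule.mem_sSup_of_directed ⟨y, hy⟩ hchain.directedOn).mp hx
          exact (hc hP).2 x hxP hx0⟩, fun z hz => le_sSup hz⟩)
      N₀ ⟨le_rfl, fun x hx hx0 => ⟨1, by simpa using hx, by simpa using hx0⟩⟩
    exact ⟨E, h1, h2.1, fun P hP hEP => h2.2 hP hEP⟩
  -- Zorn: maximal complement C of E
  obtain ⟨C, hCE, hCmax⟩ :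
      ∃ C : Submodule S J, C ⊓ E = ⊥ ∧ ∀ ⦃P⦄, P ⊓ E = ⊥ → C ≤ P → P ≤ C := by
    obtain ⟨C, -, h2⟩ := zorn_le_nonempty₀ {P : Submodule S J | P ⊓ E = ⊥}
      (fun c hc hchain y hy => ⟨sSup c, by
        refine eq_bot_iff.mpr fun x hx => ?_
        obtain ⟨hx1, hx2⟩ := Submodule.mem_inf.mp hx
        obtain ⟨P, hP, hxP⟩ := (Submodule.mem_sSup_of_directed ⟨y, hy⟩ hchain.directedOn).mp hx1
        exact (hc hP) ▸ Submodule.mem_inf.mpr ⟨hxP, hx2⟩, fun z hz => le_sSup hz⟩)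
      ⊥ (by simp)
    exact ⟨C, h2.1, fun P hP hCP => h2.2 hP hCP⟩
  -- the essential mono φ : E → J/C
  let φ : E →ₗ[S] (J ⧸ C) := C.mkQ ∘ₗ E.subtype
  have hEC : ∀ x : E, (x : J) ∈ C → x = 0 := by
    intro x hx
    have : (x : J) ∈ C ⊓ E := Submodule.mem_inf.mpr ⟨hx, x.2⟩
    rw [hCE] at this
    exact Subtype.ext this
  have hφinj : Function.Injective φ := by
    rw [← LinearMap.ker_eq_bot, eq_bot_iff]
    intro x hx
    exact hEC x ((Submodule.Quotient.mk_eq_zero C).mp hx)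
  -- essential image of φ
  have hφess : ∀ y : J ⧸ C, y ≠ 0 → ∃ (s : S) (x : E), s • y = φ x ∧ x ≠ 0 := by
    intro y hy
    obtain ⟨j, rfl⟩ := C.mkQ_surjective y
    have hjC : j ∉ C := fun h => hy ((Submodule.Quotient.mk_eq_zero C).mpr h)
    have hD : ¬((C ⊔ S ∙ j) ⊓ E = ⊥) := by
      intro h
      exact hjC (hCmax h le_sup_left
        (Submodule.mem_sup_right (Submodule.mem_span_singleton_self j)))
    obtain ⟨x, hx, hx0⟩ := (Submodule.ne_bot_iff _).mp hD
    obtain ⟨hxD, hxE⟩ := Submodule.mem_inf.mp hx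
    obtain ⟨c, hc, z, hz, rfl⟩ := Submodule.mem_sup.mp hxD
    obtain ⟨s, rfl⟩ := Submodule.mem_span_singleton.mp hz
    refine ⟨s, ⟨c + s • j, hxE⟩, ?_, fun h => hx0 (by simpa using congrArg Subtype.val h)⟩
    show s • C.mkQ j = C.mkQ (c + s • j)
    have hc0 : C.mkQ c = 0 := (Submodule.Quotient.mk_eq_zero C).mpr hc
    rw [map_add, ← map_smul, hc0, zero_add]
  -- extend incl : E → J along φ using injectivity of J
  obtain ⟨g, hg⟩ := hJinj.out φ hφinj E.subtype
  have hginj : Function.Injective g := by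
    rw [← LinearMap.ker_eq_bot, eq_bot_iff]
    intro y hy
    by_contra hy0
    have hy0' : y ≠ 0 := fun h => hy0 (h ▸ Submodule.zero_mem _)
    obtain ⟨s, x, hsy, hx0⟩ := hφess y hy0'
    have : (x : J) = 0 := by
      have := hg x
      rw [← hsy, map_smul, LinearMap.mem_ker.mp hy, smul_zero] at this
      exact this.symm
    exact hx0 (Subtype.ext this)
  -- the image of g is an essential extension containing E, hence equals E
  have hEg : E ≤ LinearMap.range g := fun e he =>
    ⟨φ ⟨e, he⟩, hg ⟨e, he⟩⟩
  have hgess : LinearMap.range g ∈ ess := by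
    refine ⟨le_trans hEmem.1 hEg, ?_⟩
    rintro _ ⟨y, rfl⟩ hz0
    have hy0 : y ≠ 0 := fun h => hz0 (by rw [h, map_zero])
    obtain ⟨s, x, hsy, hx0⟩ := hφess y hy0
    have hsz : s • g y = (x : J) := by rw [← map_smul, hsy, hg]; rfl
    have hxJ0 : (x : J) ≠ 0 := fun h => hx0 (Subtype.ext h)
    obtain ⟨t, htN, ht0⟩ := hEmem.2 (x : J) x.2 hxJ0
    exact ⟨t * s, by rw [mul_smul, hsz]; exact htN, by rw [mul_smul, hsz]; exact ht0⟩
  have hrange : LinearMap.range g = E := le_antisymm (hEmax hgess hEg) hEg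
  -- retraction r : J → E
  have hmem : ∀ j : J, g (C.mkQ j) ∈ E := fun j => hrange ▸ ⟨C.mkQ j, rfl⟩
  let r : J →ₗ[S] E := LinearMap.codRestrict E (g ∘ₗ C.mkQ) hmem
  have hr : ∀ x : E, r (x : J) = x := fun x => Subtype.ext (hg x)
  -- E is injective
  have hEinj : Module.Injective S E := by
    constructor
    intro X Y _ _ _ _ f hf h
    obtain ⟨H, hH⟩ := hJinj.out f hf (E.subtype ∘ₗ h)
    exact ⟨r ∘ₗ H, fun x => by
      simp only [LinearMap.comp_apply]
      rw [hH]
      exact hr (h x)⟩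
  -- assemble
  refine ⟨E, inferInstance, inferInstance, hEinj,
    LinearMap.codRestrict E ι (fun n => hEmem.1 ⟨n, rfl⟩), ?_, ?_⟩
  · intro a b hab
    exact hιinj (congrArg Subtype.val hab)
  · intro T hT
    obtain ⟨x, hxT, hx0⟩ := (Submodule.ne_bot_iff T).mp hT
    have hxJ0 : (x : J) ≠ 0 := fun h => hx0 (Subtype.ext h)
    obtain ⟨s, hsN, hs0⟩ := hEmem.2 (x : J) x.2 hxJ0
    obtain ⟨n, hn⟩ := hsN
    refine (Submodule.ne_bot_iff _).mpr ⟨s • x, Submodule.mem_inf.mpr ⟨T.smul_mem s hxT,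
      ⟨n, Subtype.ext (by simpa using hn)⟩⟩, fun h => hs0 ?_⟩
    exact congrArg Subtype.val h


theorem exists_hom_ne_zero (S : Type) [CommRing S] [IsLocalRing S]
    (E : Type) [AddCommGroup E] [Module S E] (hE : IsInjectiveHull S (cogenerator S) E)
    (X : Type) [AddCommGroup X] [Module S X] (x : X) (hx : x ≠ 0) :
    ∃ h : X →ₗ[S] E, h x ≠ 0 := by
  classical
  obtain ⟨hEinj, f, hfinj, -⟩ := hE
  let m : MaximalSpectrum S := ⟨maximalIdeal S, maximalIdeal.isMaximal S⟩
  let f' : (⨁ n : MaximalSpectrum S, S ⧸ n.asIdeal) →ₗ[S] E := f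
  have hf'inj : Function.Injective f' := hfinj
  let ℓ : S →ₗ[S] E :=
    f' ∘ₗ (DirectSum.lof S (MaximalSpectrum S) (fun n => S ⧸ n.asIdeal) m) ∘ₗ (m.asIdeal).mkQ
  have h1m : ((m.asIdeal).mkQ 1 : S ⧸ m.asIdeal) ≠ 0 := by
    intro h
    exact (Ideal.ne_top_iff_one _).mp (maximalIdeal.isMaximal S).ne_top
      ((Submodule.Quotient.mk_eq_zero _).mp h)
  have hl1 : ℓ 1 ≠ 0 := by
    intro h
    apply h1m
    have h2 := hf'inj (a₁ := DirectSum.lof S (MaximalSpectrum S)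
      (fun n => S ⧸ n.asIdeal) m ((m.asIdeal).mkQ 1)) (a₂ := 0) (by rw [map_zero]; exact h)
    rw [DirectSum.lof_eq_of] at h2
    refine DirectSum.of_injective (β := fun n : MaximalSpectrum S => S ⧸ n.asIdeal) m ?_
    rw [(DirectSum.of (fun n : MaximalSpectrum S => S ⧸ n.asIdeal) m).map_zero]
    exact h2
  let A : S →ₗ[S] X := LinearMap.toSpanSingleton S X x
  have hAne : LinearMap.ker A ≠ ⊤ := by
    intro h
    apply hx
    have : (1 : S) ∈ LinearMap.ker A := h ▸ Submodule.mem_top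
    simpa [A, LinearMap.mem_ker, LinearMap.toSpanSingleton_apply] using this
  have hker : LinearMap.ker A ≤ LinearMap.ker ℓ := by
    intro a ha
    have ham : a ∈ maximalIdeal S := le_maximalIdeal hAne ha
    have : (m.asIdeal).mkQ a = 0 := (Submodule.Quotient.mk_eq_zero _).mpr ham
    simp only [ℓ, LinearMap.mem_ker, LinearMap.comp_apply, this, map_zero]
  let Abar : (S ⧸ LinearMap.ker A) →ₗ[S] X := (LinearMap.ker A).liftQ A le_rfl
  have hAbarinj : Function.Injective Abar :=
    LinearMap.ker_eq_bot.mp (Submodule.ker_liftQ_eq_bot _ _ _ le_rfl)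
  obtain ⟨h, hh⟩ := hEinj.out Abar hAbarinj ((LinearMap.ker A).liftQ ℓ hker)
  have hx1 : Abar ((LinearMap.ker A).mkQ 1) = x := by
    show A 1 = x
    simp [A, LinearMap.toSpanSingleton_apply]
  have h2 : h x = ℓ 1 := by rw [← hx1, hh]; rfl
  exact ⟨h, by rw [h2]; exact hl1⟩


/-- the cosupport (defined via Richardson colocalization) is stable
under specialization. -/
theorem stmt6 (R : Type) [CommRing R] [IsNoetherianRing R]
    (M : Type) [AddCommGroup M] [Module R M]
    (p q : PrimeSpectrum R) (hp : p ∈ CoSupport R M) (hpq : p.asIdeal ≤ q.asIdeal) :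
    q ∈ CoSupport R M := by
  intro E _ _ hE Ep _ _ hEp
  obtain ⟨Ep', _, _, hEp'⟩ := exists_injectiveHull (Localization.AtPrime p.asIdeal)
    (cogenerator (Localization.AtPrime p.asIdeal))
  have hnt := hp E hE Ep' hEp'
  have hne : ∃ y : LocalizedModule p.asIdeal.primeCompl (M →ₗ[R] E), y ≠ 0 := by
    by_contra hcon
    push_neg at hcon
    obtain ⟨f1, f2, hf12⟩ := hnt.exists_pair_ne
    exact hf12 (LinearMap.ext fun y => by rw [hcon y, map_zero, map_zero])
  obtain ⟨y, hy⟩ := hne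
  have key : ∃ x : M →ₗ[R] E, (LocalizedModule.mk x (1 : q.asIdeal.primeCompl) :
      LocalizedModule q.asIdeal.primeCompl (M →ₗ[R] E)) ≠ 0 := by
    revert hy
    induction y using LocalizedModule.induction_on with
    | _ x s =>
      intro hy
      refine ⟨x, fun h0 => hy ?_⟩
      rw [show (0 : LocalizedModule q.asIdeal.primeCompl (M →ₗ[R] E)) =
        LocalizedModule.mk 0 1 from (LocalizedModule.zero_mk 1).symm] at h0
      obtain ⟨u, hu⟩ := LocalizedModule.mk_eq.mp h0
      have hux : (u : R) • x = 0 := by simpa [Submonoid.smul_def] using hu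
      rw [show (0 : LocalizedModule p.asIdeal.primeCompl (M →ₗ[R] E)) =
        LocalizedModule.mk 0 s from (LocalizedModule.zero_mk s).symm]
      apply LocalizedModule.mk_eq.mpr
      refine ⟨⟨(u : R), fun hmem => u.2 (hpq hmem)⟩, ?_⟩
      simp only [Submonoid.smul_def, smul_zero]
      rw [smul_comm]
      show (s : R) • ((u : R) • x) = 0
      rw [hux, smul_zero]
  obtain ⟨x, hx⟩ := key
  obtain ⟨h, hh⟩ := exists_hom_ne_zero (Localization.AtPrime q.asIdeal) Ep hEp
    (LocalizedModule q.asIdeal.primeCompl (M →ₗ[R] E)) _ hx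
  exact ⟨h, 0, fun hcon => hh (by rw [hcon]; simp)⟩
end

section
/- Let R be a Noetherian ring, M a finitely generated R-module and N any R-module. Then CoSupp(M ⊗_R N) ⊆ Supp M ∩ CoSupp N. -/
open CategoryTheory CategoryTheory.Limits IsLocalRing DirectSum

theorem exists_embedding_injective (R : Type) [CommRing R]
    (N : Type) [AddCommGroup N] [Module R N] :
    ∃ (J : Type) (_ : AddCommGroup J) (_ : Module R J),
      Module.Injective R J ∧ ∃ f₀ : N →ₗ[R] J, Function.Injective f₀ := by
  let 𝒩 := ModuleCat.of R N
  refine ⟨↥(Injective.under 𝒩), inferInstance, inferInstance, ?_, (Injective.ι 𝒩).hom, ?_⟩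
  · have : Injective (ModuleCat.of R ↥(Injective.under 𝒩)) :=
      (inferInstance : Injective (Injective.under 𝒩))
    exact Module.injective_module_of_injective_object R _
  · exact (ModuleCat.mono_iff_injective (Injective.ι 𝒩)).mp inferInstance

/-- `A` is essential in `B` (elementwise form), inside an ambient module `J`. -/
def EssIn {R J : Type} [CommRing R] [AddCommGroup J] [Module R J]
    (A B : Submodule R J) : Prop :=
  A ≤ B ∧ ∀ x : J, x ∈ B → x ≠ 0 → ∃ r : R, r • x ∈ A ∧ r • x ≠ 0

theorem exists_injective_hull (R : Type) [CommRing R]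
    (N : Type) [AddCommGroup N] [Module R N] :
    ∃ (E : Type) (_ : AddCommGroup E) (_ : Module R E), IsInjectiveHull R N E := by
  obtain ⟨J, _, _, hJ, f₀, hf₀⟩ := exists_embedding_injective R N
  set N₀ := LinearMap.range f₀ with hN₀
  -- Zorn: maximal essential extension S of N₀ in J
  obtain ⟨S, hN₀S', hS⟩ : ∃ S, N₀ ≤ S ∧ Maximal (fun S => EssIn N₀ S) S := by
    apply zorn_le_nonempty₀
    · intro c hc hchain y hy
      refine ⟨sSup c, ⟨le_trans (hc hy).1 (le_sSup hy), ?_⟩, fun z hz => le_sSup hz⟩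
      intro x hx hxne
      obtain ⟨B, hBc, hxB⟩ := (Submodule.mem_sSup_of_directed ⟨y, hy⟩ hchain.directedOn).mp hx
      exact (hc hBc).2 x hxB hxne
    · exact ⟨le_rfl, fun x hx hxne => ⟨1, by simpa using hx, by simpa using hxne⟩⟩
  have hN₀S : N₀ ≤ S := hS.1.1
  -- Zorn: maximal T with S ⊓ T = ⊥
  obtain ⟨T, _, hT⟩ : ∃ T, (⊥ : Submodule R J) ≤ T ∧ Maximal (fun T => S ⊓ T = ⊥) T := by
    apply zorn_le_nonempty₀
    · intro c hc hchain y hy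
      refine ⟨sSup c, ?_, fun z hz => le_sSup hz⟩
      show S ⊓ sSup c = ⊥
      rw [eq_bot_iff]
      intro x hx
      obtain ⟨B, hBc, hxB⟩ :=
        (Submodule.mem_sSup_of_directed ⟨y, hy⟩ hchain.directedOn).mp hx.2
      have : x ∈ S ⊓ B := ⟨hx.1, hxB⟩
      rwa [hc hBc] at this
    · exact inf_bot_eq S
  have hST : S ⊓ T = ⊥ := hT.1
  -- mkQ is injective on S
  have hπS : ∀ x ∈ S, T.mkQ x = 0 → x = 0 := by
    intro x hx hx0
    have hxT : x ∈ T := by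
      rwa [Submodule.mkQ_apply, Submodule.Quotient.mk_eq_zero] at hx0
    have : x ∈ S ⊓ T := ⟨hx, hxT⟩
    rwa [hST, Submodule.mem_bot] at this
  -- the image of S is essential in J ⧸ T
  have hb : ∀ y : J ⧸ T, y ≠ 0 → ∃ r : R,
      r • y ∈ Submodule.map T.mkQ S ∧ r • y ≠ 0 := by
    intro y hy
    obtain ⟨u, rfl⟩ := Submodule.mkQ_surjective T y
    have hu : u ∉ T := fun h => hy (by
      rwa [Submodule.mkQ_apply, Submodule.Quotient.mk_eq_zero])
    have hne : S ⊓ (T ⊔ (R ∙ u)) ≠ ⊥ := by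
      intro h
      have h1 : T ⊔ (R ∙ u) ≤ T := hT.2 h le_sup_left
      exact hu (h1 (Submodule.mem_sup_right (Submodule.mem_span_singleton_self u)))
    obtain ⟨s, hsmem, hsne⟩ := (Submodule.ne_bot_iff _).mp hne
    obtain ⟨t, ht, v, hv, hstv⟩ := Submodule.mem_sup.mp hsmem.2
    obtain ⟨r, rfl⟩ := Submodule.mem_span_singleton.mp hv
    have hπt : T.mkQ t = 0 := by
      rw [Submodule.mkQ_apply, Submodule.Quotient.mk_eq_zero]; exact ht
    have hπs : T.mkQ s = r • T.mkQ u := by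
      rw [← hstv, map_add, map_smul, hπt, zero_add]
    refine ⟨r, ?_, ?_⟩
    · rw [← hπs]
      exact Submodule.mem_map_of_mem hsmem.1
    · intro h0
      exact hsne (hπS s hsmem.1 (by rw [hπs, h0]))
  -- the restriction of mkQ to S is a linear equivalence onto its image
  have hres : ∀ x ∈ S, T.mkQ x ∈ Submodule.map T.mkQ S :=
    fun x hx => Submodule.mem_map_of_mem hx
  let πr : ↥S →ₗ[R] ↥(Submodule.map T.mkQ S) := (T.mkQ).restrict hres
  have hπr_bij : Function.Bijective πr := by
    constructor
    · intro a b hab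
      have hval : T.mkQ (a : J) = T.mkQ (b : J) := congrArg Subtype.val hab
      have h0 : T.mkQ ((a : J) - b) = 0 := by rw [map_sub, hval, sub_self]
      exact Subtype.ext (sub_eq_zero.mp (hπS _ (sub_mem a.2 b.2) h0))
    · rintro ⟨y, hy⟩
      obtain ⟨s, hsS, rfl⟩ := hy
      exact ⟨⟨s, hsS⟩, rfl⟩
  let e := LinearEquiv.ofBijective πr hπr_bij
  let σ : ↥(Submodule.map T.mkQ S) →ₗ[R] J := S.subtype ∘ₗ e.symm.toLinearMap
  obtain ⟨g, hg⟩ := hJ.out (Submodule.map T.mkQ S).subtype Subtype.val_injective σ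
  have hgs : ∀ s ∈ S, g (T.mkQ s) = s := by
    intro s hsS
    have h1 : (⟨T.mkQ s, hres s hsS⟩ : ↥(Submodule.map T.mkQ S)) = e ⟨s, hsS⟩ :=
      Subtype.ext rfl
    have h2 := hg ⟨T.mkQ s, hres s hsS⟩
    rw [show ((Submodule.map T.mkQ S).subtype ⟨T.mkQ s, hres s hsS⟩) = T.mkQ s from rfl] at h2
    rw [h2, h1]
    show (e.symm (e ⟨s, hsS⟩) : J) = s
    rw [e.symm_apply_apply]
  have hginj : Function.Injective g := by
    have hker : ∀ y, g y = 0 → y = 0 := by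
      intro y hy0
      by_contra hyne
      obtain ⟨r, hr1, hr2⟩ := hb y hyne
      obtain ⟨s, hsS, hsy⟩ := hr1
      apply hr2
      rw [← hsy]
      have hs0 : s = 0 := by
        have h3 : g (T.mkQ s) = s := hgs s hsS
        rw [hsy, map_smul, hy0, smul_zero] at h3
        exact h3.symm
      rw [hs0, map_zero]
    intro a b hab
    have h0 : g (a - b) = 0 := by rw [map_sub, hab, sub_self]
    exact sub_eq_zero.mp (hker _ h0)
  have hrange : LinearMap.range g = S := by
    have hSle : S ≤ LinearMap.range g := fun s hsS => ⟨T.mkQ s, hgs s hsS⟩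
    have hmem : EssIn N₀ (LinearMap.range g) := by
      refine ⟨hN₀S.trans hSle, ?_⟩
      intro x hx hxne
      obtain ⟨y, rfl⟩ := hx
      have hyne : y ≠ 0 := by rintro rfl; simp at hxne
      obtain ⟨r, hr1, hr2⟩ := hb y hyne
      obtain ⟨s, hsS, hsy⟩ := hr1
      have hrx : r • g y = s := by rw [← map_smul, ← hsy, hgs s hsS]
      have hsne : s ≠ 0 := fun h => hr2 (by rw [← hsy, h, map_zero])
      obtain ⟨r', hr'1, hr'2⟩ := hS.1.2 s hsS hsne
      exact ⟨r' * r, by rw [mul_smul, hrx]; exact hr'1, by rw [mul_smul, hrx]; exact hr'2⟩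
    exact le_antisymm (hS.2 hmem hSle) hSle
  have hmap : Submodule.map T.mkQ S = ⊤ := by
    rw [eq_top_iff]
    intro y _
    have hgyS : g y ∈ S := by rw [← hrange]; exact ⟨y, rfl⟩
    have h4 : g (T.mkQ (g y)) = g y := hgs (g y) hgyS
    have h5 := hginj h4
    rw [← h5]
    exact Submodule.mem_map_of_mem hgyS
  have htop : S ⊔ T = ⊤ := by
    rw [eq_top_iff]
    intro j _
    have hmem : T.mkQ j ∈ Submodule.map T.mkQ S := by rw [hmap]; trivial
    obtain ⟨s, hsS, hsj⟩ := hmem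
    have h0 : T.mkQ (j - s) = 0 := by rw [map_sub, hsj, sub_self]
    have hjt : j - s ∈ T := by
      rwa [Submodule.mkQ_apply, Submodule.Quotient.mk_eq_zero] at h0
    exact Submodule.mem_sup.mpr ⟨s, hsS, j - s, hjt, by abel⟩
  have hcompl : IsCompl S T := ⟨disjoint_iff.mpr hST, codisjoint_iff.mpr htop⟩
  have hSinj : Module.Injective R ↥S := by
    constructor
    intro X Y _ _ _ _ f hf φ
    obtain ⟨h, hh⟩ := hJ.out f hf (S.subtype ∘ₗ φ)
    refine ⟨(Submodule.linearProjOfIsCompl S T hcompl) ∘ₗ h, fun x => ?_⟩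
    have h6 := hh x
    simp only [LinearMap.coe_comp, Function.comp_apply] at h6 ⊢
    rw [h6]
    exact Submodule.linearProjOfIsCompl_apply_left hcompl (φ x)
  refine ⟨↥S, inferInstance, inferInstance, hSinj,
    LinearMap.codRestrict S f₀ (fun x => hN₀S ⟨x, rfl⟩), ?_, ?_⟩
  · intro a b hab
    exact hf₀ (congrArg Subtype.val hab)
  · intro U hU
    obtain ⟨x, hxU, hxne⟩ := (Submodule.ne_bot_iff U).mp hU
    have hxJ : (x : J) ≠ 0 := fun h => hxne (Subtype.ext h)
    obtain ⟨r, hr1, hr2⟩ := hS.1.2 (x : J) x.2 hxJ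
    obtain ⟨nn, hnn⟩ := hr1
    rw [Submodule.ne_bot_iff]
    refine ⟨r • x, ⟨Submodule.smul_mem U r hxU, ⟨nn, ?_⟩⟩, ?_⟩
    · apply Subtype.ext
      simpa using hnn
    · intro h
      exact hr2 (by simpa using congrArg Subtype.val h)

/-- `CoSupp (M ⊗ N) ⊆ Supp M ∩ CoSupp N` for `M` finitely generated. -/
theorem stmt7 (R : Type) [CommRing R] [IsNoetherianRing R]
    (M : Type) [AddCommGroup M] [Module R M] [Module.Finite R M]
    (N : Type) [AddCommGroup N] [Module R N] :
    CoSupport R (TensorProduct R M N) ⊆ Module.support R M ∩ CoSupport R N := by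
  intro p hp
  constructor
  · -- `p ∈ Supp M`
    by_contra hnot
    have hann : ∃ s ∈ Module.annihilator R M, s ∉ p.asIdeal := by
      by_contra hc
      push_neg at hc
      exact hnot (by
        rw [Module.support_eq_zeroLocus, PrimeSpectrum.mem_zeroLocus]
        exact fun s hs => hc s hs)
    obtain ⟨s, hsann, hsp⟩ := hann
    obtain ⟨E, iE1, iE2, hE⟩ := exists_injective_hull R (cogenerator R)
    obtain ⟨Ep, iEp1, iEp2, hEp⟩ := exists_injective_hull (Localization.AtPrime p.asIdeal)
      (cogenerator (Localization.AtPrime p.asIdeal))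
    letI := iE1; letI := iE2; letI := iEp1; letI := iEp2
    have hnt := hp E hE Ep hEp
    have hsM : ∀ m : M, s • m = 0 := fun m => Module.mem_annihilator.mp hsann m
    have hsT : ∀ x : TensorProduct R M N, s • x = 0 := by
      intro x
      induction x using TensorProduct.induction_on with
      | zero => simp
      | tmul m n => rw [TensorProduct.smul_tmul', hsM, TensorProduct.zero_tmul]
      | add a b ha hb => rw [smul_add, ha, hb, add_zero]
    have hsQ : ∀ f : TensorProduct R M N →ₗ[R] E, s • f = 0 := by
      intro f
      apply LinearMap.ext
      intro x
      show s • f x = 0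
      rw [← map_smul, hsT, map_zero]
    have hsub : Subsingleton
        (LocalizedModule p.asIdeal.primeCompl (TensorProduct R M N →ₗ[R] E)) := by
      refine ⟨fun a b => ?_⟩
      have hz : ∀ z : LocalizedModule p.asIdeal.primeCompl (TensorProduct R M N →ₗ[R] E),
          z = 0 := by
        intro z
        induction z using LocalizedModule.induction_on with
        | _ f t =>
          rw [← LocalizedModule.zero_mk t, LocalizedModule.mk_eq]
          refine ⟨⟨s, hsp⟩, ?_⟩
          rw [smul_zero, smul_zero, Submonoid.smul_def, Submonoid.smul_def, smul_comm,
            hsQ, smul_zero]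
      rw [hz a, hz b]
    have hss : Subsingleton
        ((LocalizedModule p.asIdeal.primeCompl (TensorProduct R M N →ₗ[R] E))
          →ₗ[Localization.AtPrime p.asIdeal] Ep) := by
      refine ⟨fun F G => ?_⟩
      ext z
      rw [Subsingleton.elim z 0, map_zero, map_zero]
    exact absurd hnt (not_nontrivial_iff_subsingleton.mpr hss)
  · -- `p ∈ CoSupp N`
    intro E iE1 iE2 hE Ep iEp1 iEp2 hEp
    have hnt := hp E hE Ep hEp
    obtain ⟨F₁, F₂, hF⟩ := hnt
    set F := F₁ - F₂ with hFdef
    have hFne : F ≠ 0 := sub_ne_zero.mpr hF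
    obtain ⟨n, π, hπ⟩ := Module.Finite.exists_fin' R M
    classical
    let c1 : (TensorProduct R M N →ₗ[R] E) →ₗ[R] (M →ₗ[R] (N →ₗ[R] E)) :=
      (TensorProduct.lift.equiv (RingHom.id R) M N E).symm.toLinearMap
    let c2 : (M →ₗ[R] (N →ₗ[R] E)) →ₗ[R] ((Fin n → R) →ₗ[R] (N →ₗ[R] E)) :=
      LinearMap.lcomp R (N →ₗ[R] E) π
    let c3 : ((Fin n → R) →ₗ[R] (N →ₗ[R] E)) →ₗ[R] (Fin n → (N →ₗ[R] E)) :=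
      (LinearEquiv.piRing R (N →ₗ[R] E) (Fin n) R).toLinearMap
    let j : (TensorProduct R M N →ₗ[R] E) →ₗ[R] (Fin n → (N →ₗ[R] E)) := c3 ∘ₗ c2 ∘ₗ c1
    have hjinj : Function.Injective j := by
      have h1 : Function.Injective c1 := (TensorProduct.lift.equiv (RingHom.id R) M N E).symm.injective
      have h2 : Function.Injective c2 := by
        intro a b hab
        apply LinearMap.ext
        intro m
        obtain ⟨x, rfl⟩ := hπ m
        exact DFunLike.congr_fun hab x
      have h3 : Function.Injective c3 := (LinearEquiv.piRing R (N →ₗ[R] E) (Fin n) R).injective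
      exact (h3.comp h2).comp h1
    let J' := LocalizedModule.map p.asIdeal.primeCompl j
    have hJ'inj : Function.Injective J' :=
      LocalizedModule.map_injective p.asIdeal.primeCompl j hjinj
    obtain ⟨H, hH⟩ := hEp.1.out J' hJ'inj F
    by_cases hex : ∃ i : Fin n, H ∘ₗ (LocalizedModule.map p.asIdeal.primeCompl
        (LinearMap.single R (fun _ => (N →ₗ[R] E)) i)) ≠ 0
    · obtain ⟨i, hi⟩ := hex
      exact ⟨_, 0, hi⟩
    · push_neg at hex
      exfalso
      apply hFne
      have hH0 : H = 0 := by
        ext z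
        induction z using LocalizedModule.induction_on with
        | _ q t =>
          have h1 : (LocalizedModule.mk q t :
              LocalizedModule p.asIdeal.primeCompl (Fin n → (N →ₗ[R] E)))
              = Localization.mk 1 t • LocalizedModule.mk q 1 := by
            rw [LocalizedModule.mk_smul_mk, one_smul, mul_one]
          have h2 : (LocalizedModule.mk q 1 :
              LocalizedModule p.asIdeal.primeCompl (Fin n → (N →ₗ[R] E)))
              = ∑ i : Fin n, LocalizedModule.map p.asIdeal.primeCompl
                  (LinearMap.single R (fun _ => (N →ₗ[R] E)) i)
                  (LocalizedModule.mk (q i) 1) := by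
            have hterm : ∀ i : Fin n, LocalizedModule.map p.asIdeal.primeCompl
                (LinearMap.single R (fun _ => (N →ₗ[R] E)) i)
                (LocalizedModule.mk (q i) 1)
                = LocalizedModule.mk (Pi.single i (q i)) 1 := by
              intro i
              rw [LocalizedModule.map_mk]
              rfl
            rw [Finset.sum_congr rfl (fun i _ => hterm i)]
            calc (LocalizedModule.mk q 1 :
                LocalizedModule p.asIdeal.primeCompl (Fin n → (N →ₗ[R] E)))
                = LocalizedModule.mkLinearMap p.asIdeal.primeCompl (Fin n → (N →ₗ[R] E)) q :=
                  rfl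
              _ = LocalizedModule.mkLinearMap p.asIdeal.primeCompl (Fin n → (N →ₗ[R] E))
                    (∑ i : Fin n, Pi.single i (q i)) := by rw [Finset.univ_sum_single]
              _ = ∑ i : Fin n, LocalizedModule.mkLinearMap p.asIdeal.primeCompl
                    (Fin n → (N →ₗ[R] E)) (Pi.single i (q i)) := map_sum _ _ _
          have h3 : ∀ i : Fin n, H (LocalizedModule.map p.asIdeal.primeCompl
              (LinearMap.single R (fun _ => (N →ₗ[R] E)) i)
              (LocalizedModule.mk (q i) 1)) = 0 := by
            intro i
            exact DFunLike.congr_fun (hex i) (LocalizedModule.mk (q i) 1)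
          show H (LocalizedModule.mk q t) = 0
          rw [h1, map_smul, h2, map_sum,
            Finset.sum_congr rfl (fun i _ => h3 i), Finset.sum_const_zero, smul_zero]
      ext x
      rw [← hH x, hH0]
      simp
end
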